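/- arXiv:math/0203176 — 2 statements merged into one kernel-verified Lean document; each statement's English description precedes it below -/
import Mathlib

section
/- The Vandermonde function h(x) = ∏_{i<j} (x_j - x_i) is harmonic on ℝ^n, i.e., its Laplacian vanishes identically. -/
open Finset

/-- The Vandermonde function `h(x) = ∏_{i<j} (x_j - x_i)` on `ℝ^n`. -/
noncomputable def vandermondeFn (n : ℕ) (x : Fin n → ℝ) : ℝ :=
  ∏ p ∈ Finset.univ.filter (fun p : Fin n × Fin n => p.1 < p.2), (x p.2 - x p.1)

noncomputable def vcoef (n : ℕ) (y : Fin n → ℝ) (k : Fin n) : ℝ :=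
  (∏ j ∈ Finset.univ.erase k, (if k < j then (-1:ℝ) else 1)) *
    ∏ p ∈ Finset.univ.filter (fun p : Fin n × Fin n => p.1 < p.2 ∧ p.1 ≠ k ∧ p.2 ≠ k),
      (y p.2 - y p.1)

lemma lemA {n : ℕ} (y : Fin n → ℝ) (k : Fin n) (t : ℝ) :
    vandermondeFn n (Function.update y k t)
      = vcoef n y k * ∏ j ∈ Finset.univ.erase k, (t - y j) := by
  classical
  unfold vandermondeFn vcoef
  rw [← Finset.prod_filter_mul_prod_filter_not
    (Finset.univ.filter (fun p : Fin n × Fin n => p.1 < p.2))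
    (fun p => p.1 ≠ k ∧ p.2 ≠ k)]
  have h1 : ∏ p ∈ (Finset.univ.filter (fun p : Fin n × Fin n => p.1 < p.2)).filter
        (fun p => p.1 ≠ k ∧ p.2 ≠ k),
        (Function.update y k t p.2 - Function.update y k t p.1)
      = ∏ p ∈ Finset.univ.filter (fun p : Fin n × Fin n => p.1 < p.2 ∧ p.1 ≠ k ∧ p.2 ≠ k),
        (y p.2 - y p.1) := by
    rw [Finset.filter_filter]
    refine Finset.prod_congr rfl fun p hp => ?_
    simp only [Finset.mem_filter] at hp
    rw [Function.update_of_ne hp.2.2.2, Function.update_of_ne hp.2.2.1]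
  have h2 : ∏ p ∈ (Finset.univ.filter (fun p : Fin n × Fin n => p.1 < p.2)).filter
        (fun p => ¬(p.1 ≠ k ∧ p.2 ≠ k)),
        (Function.update y k t p.2 - Function.update y k t p.1)
      = ∏ j ∈ Finset.univ.erase k, (if k < j then y j - t else t - y j) := by
    refine Finset.prod_nbij' (fun p => if p.1 = k then p.2 else p.1)
      (fun j => if k < j then (k, j) else (j, k)) ?_ ?_ ?_ ?_ ?_
    · rintro ⟨p1, p2⟩ hp
      simp only [Finset.mem_filter, Finset.mem_univ, true_and, not_and_or, not_not] at hp
      obtain ⟨hlt, hk⟩ := hp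
      simp only [Finset.mem_erase, Finset.mem_univ, and_true]
      rcases hk with h | h
      · rw [if_pos h]; exact ne_of_gt (h ▸ hlt)
      · have h1' : p1 ≠ k := fun hc => absurd hlt (by rw [hc, h]; exact lt_irrefl k)
        rw [if_neg h1']; exact h1'
    · intro j hj
      simp only [Finset.mem_erase, Finset.mem_univ, and_true] at hj
      simp only [Finset.mem_filter, Finset.mem_univ, true_and, not_and_or, not_not]
      by_cases h : k < j
      · rw [if_pos h]; exact ⟨h, Or.inl rfl⟩
      · rw [if_neg h]; exact ⟨lt_of_le_of_ne (not_lt.mp h) hj, Or.inr rfl⟩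
    · rintro ⟨p1, p2⟩ hp
      simp only [Finset.mem_filter, Finset.mem_univ, true_and, not_and_or, not_not] at hp
      obtain ⟨hlt, hk⟩ := hp
      rcases hk with h | h
      · have h2' : k < p2 := h ▸ hlt
        simp only [if_pos h, if_pos h2', Prod.mk.injEq]
        exact ⟨h.symm, trivial⟩
      · have h1' : p1 ≠ k := fun hc => absurd hlt (by rw [hc, h]; exact lt_irrefl k)
        have hl2 : p1 < k := h ▸ hlt
        simp only [if_neg h1', if_neg (not_lt.mpr hl2.le), Prod.mk.injEq]
        exact ⟨trivial, h.symm⟩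
    · intro j hj
      simp only [Finset.mem_erase, Finset.mem_univ, and_true] at hj
      by_cases h : k < j
      · simp [h]
      · simp [h, hj]
    · rintro ⟨p1, p2⟩ hp
      simp only [Finset.mem_filter, Finset.mem_univ, true_and, not_and_or, not_not] at hp
      obtain ⟨hlt, hk⟩ := hp
      rcases hk with h | h
      · have h2' : k < p2 := h ▸ hlt
        simp only [if_pos h, if_pos h2']
        rw [h, Function.update_self, Function.update_of_ne (ne_of_gt h2')]
      · have h1' : p1 ≠ k := fun hc => absurd hlt (by rw [hc, h]; exact lt_irrefl k)
        have hl2 : p1 < k := h ▸ hlt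
        simp only [if_neg h1', if_neg (not_lt.mpr hl2.le)]
        rw [h, Function.update_self, Function.update_of_ne h1']
  rw [h1, h2]
  have h3 : ∏ j ∈ Finset.univ.erase k, (if k < j then y j - t else t - y j)
      = (∏ j ∈ Finset.univ.erase k, (if k < j then (-1:ℝ) else 1))
        * ∏ j ∈ Finset.univ.erase k, (t - y j) := by
    rw [← Finset.prod_mul_distrib]
    refine Finset.prod_congr rfl fun j hj => ?_
    split_ifs <;> ring
  rw [h3]; ring

section
open Polynomial

lemma derivative_finset_prod {ι : Type*} [DecidableEq ι] (s : Finset ι) (f : ι → Polynomial ℝ) :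
    Polynomial.derivative (∏ i ∈ s, f i)
      = ∑ i ∈ s, (∏ j ∈ s.erase i, f j) * Polynomial.derivative (f i) := by
  induction s using Finset.induction with
  | empty => simp
  | @insert a s ha ih =>
      rw [Finset.prod_insert ha, derivative_mul, ih, Finset.sum_insert ha,
        Finset.erase_insert ha, Finset.mul_sum]
      have h2 : ∀ i ∈ s, (∏ j ∈ (insert a s).erase i, f j) * Polynomial.derivative (f i)
          = f a * ((∏ j ∈ s.erase i, f j) * Polynomial.derivative (f i)) := by
        intro i hi
        have hia : i ≠ a := fun h => ha (h ▸ hi)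
        rw [show (insert a s).erase i = insert a (s.erase i) from Finset.erase_insert_of_ne hia.symm,
          Finset.prod_insert (fun h => ha (Finset.erase_subset _ _ h))]
        ring
      rw [Finset.sum_congr rfl h2]
      ring

lemma lemB {n : ℕ} (c : ℝ) (y : Fin n → ℝ) (s : Finset (Fin n)) (z : ℝ) :
    iteratedDeriv 2 (fun t => c * ∏ j ∈ s, (t - y j)) z
      = c * ∑ i ∈ s, ∑ j ∈ s.erase i, ∏ m ∈ (s.erase i).erase j, (z - y m) := by
  have hf : (fun t => c * ∏ j ∈ s, (t - y j))
      = fun t => (Polynomial.C c * ∏ j ∈ s, (X - Polynomial.C (y j))).eval t := by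
    funext t; simp [eval_prod]
  have hd1 : Polynomial.derivative (Polynomial.C c * ∏ j ∈ s, (X - Polynomial.C (y j)))
      = Polynomial.C c * ∑ i ∈ s, ∏ j ∈ s.erase i, (X - Polynomial.C (y j)) := by
    rw [derivative_C_mul, derivative_finset_prod]
    simp
  have hd2 : Polynomial.derivative (Polynomial.C c * ∑ i ∈ s, ∏ j ∈ s.erase i, (X - Polynomial.C (y j)))
      = Polynomial.C c * ∑ i ∈ s, ∑ j ∈ s.erase i, ∏ m ∈ (s.erase i).erase j, (X - Polynomial.C (y m)) := by
    rw [derivative_C_mul, derivative_sum]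
    congr 1
    refine Finset.sum_congr rfl fun i _ => ?_
    rw [derivative_finset_prod]
    simp
  have hder : ∀ (p : Polynomial ℝ), deriv (fun t => p.eval t) = fun t => p.derivative.eval t := by
    intro p; funext t; exact Polynomial.deriv p
  rw [hf]
  rw [show (2:ℕ) = 1 + 1 from rfl, iteratedDeriv_succ, iteratedDeriv_one]
  rw [hder, hd1, hder, hd2]
  simp [eval_finset_sum, eval_prod]

end

lemma claim1 {n : ℕ} (y : Fin n → ℝ) (k u v : Fin n) (hku : k ≠ u) (hkv : k ≠ v)
    (huv : u ≠ v) :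
    vcoef n y k * (∏ m ∈ ((Finset.univ.erase k).erase u).erase v, (y k - y m))
        * ((y k - y u) * (y k - y v)) = vandermondeFn n y := by
  have hA := lemA y k (y k)
  rw [Function.update_eq_self] at hA
  rw [hA]
  have hu : u ∈ Finset.univ.erase k := by simp [hku.symm]
  have hv : v ∈ (Finset.univ.erase k).erase u := by simp [hkv.symm, huv.symm]
  rw [← Finset.mul_prod_erase _ _ hu, ← Finset.mul_prod_erase _ _ hv]
  ring

lemma triple {n : ℕ} (y : Fin n → ℝ) (hy : Function.Injective y) (a b c : Fin n)
    (hab : a ≠ b) (hac : a ≠ c) (hbc : b ≠ c) :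
    vcoef n y a * ∏ m ∈ ((Finset.univ.erase a).erase b).erase c, (y a - y m)
      + vcoef n y b * ∏ m ∈ ((Finset.univ.erase b).erase c).erase a, (y b - y m)
      + vcoef n y c * ∏ m ∈ ((Finset.univ.erase c).erase a).erase b, (y c - y m) = 0 := by
  have e1 := claim1 y a b c hab hac hbc
  have e2 := claim1 y b c a hbc hab.symm hac.symm
  have e3 := claim1 y c a b hac.symm hbc.symm hab
  have dab : y a - y b ≠ 0 := sub_ne_zero.mpr (hy.ne hab)
  have dac : y a - y c ≠ 0 := sub_ne_zero.mpr (hy.ne hac)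
  have dbc : y b - y c ≠ 0 := sub_ne_zero.mpr (hy.ne hbc)
  have key : (vcoef n y a * ∏ m ∈ ((Finset.univ.erase a).erase b).erase c, (y a - y m)
      + vcoef n y b * ∏ m ∈ ((Finset.univ.erase b).erase c).erase a, (y b - y m)
      + vcoef n y c * ∏ m ∈ ((Finset.univ.erase c).erase a).erase b, (y c - y m))
      * ((y a - y b) * ((y a - y c) * (y b - y c))) = 0 := by
    linear_combination (y b - y c) * e1 - (y a - y c) * e2 + (y a - y b) * e3
  rcases mul_eq_zero.mp key with h | h
  · exact h
  · exact absurd h (by exact mul_ne_zero dab (mul_ne_zero dac dbc))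

noncomputable def Psi (n : ℕ) (y : Fin n → ℝ) : ℝ :=
  ∑ k : Fin n, vcoef n y k * ∑ i ∈ Finset.univ.erase k, ∑ j ∈ (Finset.univ.erase k).erase i,
      ∏ m ∈ ((Finset.univ.erase k).erase i).erase j, (y k - y m)


section
variable {n : ℕ}

noncomputable def G (y : Fin n → ℝ) (t : Fin n × Fin n × Fin n) : ℝ :=
  vcoef n y t.1 * ∏ m ∈ ((Finset.univ.erase t.1).erase t.2.1).erase t.2.2, (y t.1 - y m)

def S3 (n : ℕ) : Finset (Fin n × Fin n × Fin n) :=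
  Finset.univ.filter (fun t => t.1 ≠ t.2.1 ∧ t.1 ≠ t.2.2 ∧ t.2.1 ≠ t.2.2)

lemma psi_eq_sum (y : Fin n → ℝ) : Psi n y = ∑ t ∈ S3 n, G y t := by
  rw [S3, Finset.sum_filter, Fintype.sum_prod_type]
  unfold Psi
  refine Finset.sum_congr rfl fun k _ => ?_
  rw [Fintype.sum_prod_type]
  have inner : ∀ i : Fin n,
      (∑ j : Fin n, if k ≠ i ∧ k ≠ j ∧ i ≠ j then G y (k, i, j) else 0)
        = if k ≠ i then (∑ j ∈ (Finset.univ.erase k).erase i, G y (k, i, j)) else 0 := by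
    intro i
    by_cases hki : k ≠ i
    · rw [if_pos hki]
      have hset : (Finset.univ.erase k).erase i
          = Finset.univ.filter (fun j => k ≠ i ∧ k ≠ j ∧ i ≠ j) := by
        ext j
        simp only [Finset.mem_erase, Finset.mem_univ, Finset.mem_filter, and_true, true_and]
        constructor
        · rintro ⟨h1, h2⟩; exact ⟨hki, Ne.symm h2, Ne.symm h1⟩
        · rintro ⟨_, h2, h3⟩; exact ⟨Ne.symm h3, Ne.symm h2⟩
      rw [hset, Finset.sum_filter]
    · rw [if_neg hki]
      apply Finset.sum_eq_zero
      intro j _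
      rw [if_neg (by tauto)]
  rw [Finset.sum_congr rfl (fun i _ => inner i)]
  have hset2 : Finset.univ.erase k = Finset.univ.filter (fun i => k ≠ i) := by
    ext i; simp [ne_comm]
  rw [Finset.mul_sum]
  rw [show (∑ i : Fin n, if k ≠ i then (∑ j ∈ (Finset.univ.erase k).erase i, G y (k, i, j)) else 0)
      = ∑ i ∈ Finset.univ.filter (fun i => k ≠ i), ∑ j ∈ (Finset.univ.erase k).erase i, G y (k, i, j)
    from (Finset.sum_filter _ _).symm]
  rw [← hset2]
  refine Finset.sum_congr rfl fun i _ => ?_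
  rw [Finset.mul_sum]
  rfl

lemma cyc_sum (y : Fin n → ℝ) :
    ∑ t ∈ S3 n, G y t = ∑ t ∈ S3 n, G y (t.2.1, t.2.2, t.1) := by
  refine Finset.sum_nbij' (fun t => (t.2.2, t.1, t.2.1)) (fun t => (t.2.1, t.2.2, t.1))
    ?_ ?_ ?_ ?_ ?_
  · intro t ht; simp only [S3, Finset.mem_filter, Finset.mem_univ, true_and] at ht ⊢; tauto
  · intro t ht; simp only [S3, Finset.mem_filter, Finset.mem_univ, true_and] at ht ⊢; tauto
  · intro t _; rfl
  · intro t _; rfl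
  · intro t _; rfl

lemma cyc_sum2 (y : Fin n → ℝ) :
    ∑ t ∈ S3 n, G y t = ∑ t ∈ S3 n, G y (t.2.2, t.1, t.2.1) := by
  refine Finset.sum_nbij' (fun t => (t.2.1, t.2.2, t.1)) (fun t => (t.2.2, t.1, t.2.1))
    ?_ ?_ ?_ ?_ ?_
  · intro t ht; simp only [S3, Finset.mem_filter, Finset.mem_univ, true_and] at ht ⊢; tauto
  · intro t ht; simp only [S3, Finset.mem_filter, Finset.mem_univ, true_and] at ht ⊢; tauto
  · intro t _; rfl
  · intro t _; rfl
  · intro t _; rfl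

lemma sum_S3_eq_zero (y : Fin n → ℝ) (hy : Function.Injective y) :
    ∑ t ∈ S3 n, G y t = 0 := by
  have h1 := cyc_sum y
  have h2 := cyc_sum2 y
  have h0 : ∑ t ∈ S3 n, (G y t + G y (t.2.1, t.2.2, t.1) + G y (t.2.2, t.1, t.2.1)) = 0 := by
    apply Finset.sum_eq_zero
    intro t ht
    simp only [S3, Finset.mem_filter, Finset.mem_univ, true_and] at ht
    exact triple y hy t.1 t.2.1 t.2.2 ht.1 ht.2.1 ht.2.2
  rw [Finset.sum_add_distrib, Finset.sum_add_distrib] at h0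
  linarith

end

lemma psi_continuous (n : ℕ) : Continuous (Psi n) := by
  unfold Psi
  apply continuous_finset_sum
  intro k _
  apply Continuous.mul
  · unfold vcoef
    apply Continuous.mul continuous_const
    apply continuous_finset_prod
    intro p _
    exact (continuous_apply p.2).sub (continuous_apply p.1)
  · apply continuous_finset_sum
    intro i _
    apply continuous_finset_sum
    intro j _
    apply continuous_finset_prod
    intro m _
    exact (continuous_apply k).sub (continuous_apply m)

lemma dense_inj (n : ℕ) : Dense {y : Fin n → ℝ | Function.Injective y} := by
  intro y
  set u : ℝ → (Fin n → ℝ) := fun t m => y m + t * (m : ℕ) with hu_def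
  have hu : Continuous u := by
    apply continuous_pi
    intro m
    exact continuous_const.add (continuous_id.mul continuous_const)
  set B : Set ℝ := {t : ℝ | ¬ Function.Injective (u t)} with hB_def
  have hBfin : B.Finite := by
    have hsub : B ⊆ (fun p : Fin n × Fin n => (y p.2 - y p.1) / ((p.1 : ℕ) - (p.2 : ℕ) : ℝ)) ''
        Set.univ := by
      intro t ht
      rw [hB_def, Set.mem_setOf_eq, Function.not_injective_iff] at ht
      obtain ⟨a, b, hab, hne⟩ := ht
      refine ⟨(a, b), Set.mem_univ _, ?_⟩
      have hval : ((a : ℕ) : ℝ) ≠ ((b : ℕ) : ℝ) := by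
        simp only [ne_eq, Nat.cast_inj]
        exact fun h => hne (Fin.val_injective h)
      have hd : ((a : ℕ) : ℝ) - ((b : ℕ) : ℝ) ≠ 0 := sub_ne_zero.mpr hval
      rw [hu_def] at hab
      simp only at hab
      field_simp
      linarith [hab]
    exact Set.Finite.subset (Set.Finite.image _ (Set.finite_univ)) hsub
  have hdense : Dense Bᶜ := Set.Countable.dense_compl ℝ hBfin.countable
  have h0 : (0 : ℝ) ∈ closure Bᶜ := hdense 0
  have hy0 : y = u 0 := by funext m; simp [hu_def]
  have himg : u '' Bᶜ ⊆ {y : Fin n → ℝ | Function.Injective y} := by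
    rintro _ ⟨t, ht, rfl⟩
    exact not_not.mp ht
  have hmem : u 0 ∈ closure (u '' Bᶜ) :=
    image_closure_subset_closure_image hu ⟨0, h0, rfl⟩
  rw [hy0]
  exact closure_mono himg hmem


/-- `h` is harmonic on `ℝ^n`: the sum of its second partial derivatives vanishes
identically. -/
theorem vandermonde_harmonic (n : ℕ) (x : Fin n → ℝ) :
    ∑ k : Fin n,
      iteratedDeriv 2 (fun t : ℝ => vandermondeFn n (Function.update x k t)) (x k) = 0 := by
  have hPhi : ∀ y : Fin n → ℝ,
      (∑ k : Fin n, iteratedDeriv 2 (fun t : ℝ => vandermondeFn n (Function.update y k t)) (y k))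
        = Psi n y := by
    intro y
    unfold Psi
    refine Finset.sum_congr rfl fun k _ => ?_
    have hfun : (fun t : ℝ => vandermondeFn n (Function.update y k t))
        = fun t => vcoef n y k * ∏ j ∈ Finset.univ.erase k, (t - y j) := funext (lemA y k)
    rw [hfun, lemB]
  have hzero : Psi n = fun _ => 0 :=
    Continuous.ext_on (dense_inj n) (psi_continuous n) continuous_const
      (fun y hy => (psi_eq_sum y).trans (sum_S3_eq_zero y hy))
  rw [hPhi x, hzero]
end

section
/- For continuous paths f₁, …, f_n on ℝ₊ vanishing at 0, the iterated min-plus product satisfies (f₁ ⊗ f₂ ⊗ ⋯ ⊗ f_n)(t) = inf_{0 ≤ s₁ ≤ ⋯ ≤ s_{n−1} ≤ t} [f₁(s₁) + (f₂(s₂) − f₂(s₁)) + ⋯ + (f_n(t) − f_n(s_{n−1}))]. -/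
/-- Min-plus convolution: `(f ⊗ g)(t) = inf_{0 ≤ s ≤ t} [f(s) + g(t) - g(s)]`. -/
noncomputable def minPlus (f g : ℝ → ℝ) (t : ℝ) : ℝ :=
  sInf ((fun s => f s + g t - g s) '' Set.Icc 0 t)

/-- The left-to-right iterated min-plus product `f₁ ⊗ f₂ ⊗ ⋯ ⊗ f_n`. -/
noncomputable def minPlusChain {n : ℕ} (f : Fin (n + 1) → ℝ → ℝ) : ℝ → ℝ :=
  (List.ofFn fun i : Fin n => f i.succ).foldl minPlus (f 0)

/-- The chain set. -/
def chainSet (n : ℕ) (f : Fin (n + 1) → ℝ → ℝ) (t : ℝ) : Set ℝ :=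
  { v : ℝ | ∃ s : Fin (n + 2) → ℝ, Monotone s ∧ s 0 = 0 ∧ s (Fin.last (n + 1)) = t ∧
      v = ∑ i : Fin (n + 1), (f i (s i.succ) - f i (s i.castSucc)) }

lemma chain_mem_Icc {n : ℕ} {s : Fin (n + 2) → ℝ} (hm : Monotone s) (h0 : s 0 = 0)
    {t : ℝ} (hl : s (Fin.last (n + 1)) = t) (i : Fin (n + 2)) : s i ∈ Set.Icc 0 t := by
  constructor
  · rw [← h0]; exact hm (Fin.zero_le i)
  · rw [← hl]; exact hm (Fin.le_last i)

lemma chainSet_nonempty (n : ℕ) (f : Fin (n + 1) → ℝ → ℝ) {t : ℝ} (ht : 0 ≤ t) :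
    (chainSet n f t).Nonempty := by
  refine ⟨_, fun i => if i = Fin.last (n + 1) then t else 0, ?_, ?_, ?_, rfl⟩
  · intro i j hij
    dsimp only
    by_cases hi : i = Fin.last (n + 1)
    · have hj : j = Fin.last (n + 1) := le_antisymm (Fin.le_last j) (hi ▸ hij)
      simp [hi, hj]
    · rw [if_neg hi]
      split <;> simp [ht]
  · dsimp only
    rw [if_neg]
    simp [Fin.ext_iff]
  · dsimp only
    simp

/-- Uniform lower bound for chain sets over all end times in `[0, t]`. -/
lemma chainSet_bdd (n : ℕ) (f : Fin (n + 1) → ℝ → ℝ) (hf : ∀ i, Continuous (f i))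
    (t : ℝ) : ∃ B : ℝ, ∀ u ∈ Set.Icc (0:ℝ) t, ∀ v ∈ chainSet n f u, B ≤ v := by
  have h : ∀ i : Fin (n + 1), ∃ C : ℝ, ∀ x ∈ Set.Icc (0:ℝ) t, ‖f i x‖ ≤ C :=
    fun i => isCompact_Icc.exists_bound_of_continuousOn (hf i).continuousOn
  choose C hC using h
  refine ⟨∑ i : Fin (n + 1), (-(2 * C i)), ?_⟩
  rintro u hu v ⟨s, hm, h0, hl, rfl⟩
  apply Finset.sum_le_sum
  intro i _
  have hsub : Set.Icc (0:ℝ) u ⊆ Set.Icc 0 t := Set.Icc_subset_Icc le_rfl hu.2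
  have h1 := hC i _ (hsub (chain_mem_Icc hm h0 hl i.succ))
  have h2 := hC i _ (hsub (chain_mem_Icc hm h0 hl i.castSucc))
  rw [Real.norm_eq_abs] at h1 h2
  have := abs_le.mp h1
  have := abs_le.mp h2
  linarith

lemma chainSet_bddBelow (n : ℕ) (f : Fin (n + 1) → ℝ → ℝ) (hf : ∀ i, Continuous (f i))
    {t : ℝ} (ht : 0 ≤ t) : BddBelow (chainSet n f t) := by
  obtain ⟨B, hB⟩ := chainSet_bdd n f hf t
  exact ⟨B, fun v hv => hB t ⟨ht, le_rfl⟩ v hv⟩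

/-- Extending a chain by snoc-ing the endpoint. -/
lemma chainSet_snoc {n : ℕ} {f : Fin (n + 2) → ℝ → ℝ} {t u w : ℝ}
    (hu : u ∈ Set.Icc 0 t) (hw : w ∈ chainSet n (fun i => f i.castSucc) u) :
    w + (f (Fin.last (n + 1)) t - f (Fin.last (n + 1)) u) ∈ chainSet (n + 1) f t := by
  obtain ⟨s, hm, h0, hl, rfl⟩ := hw
  refine ⟨Fin.snoc s t, ?_, ?_, ?_, ?_⟩
  · intro i j hij
    rcases Fin.eq_castSucc_or_eq_last j with ⟨k, rfl⟩ | rfl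
    · rcases Fin.eq_castSucc_or_eq_last i with ⟨m, rfl⟩ | rfl
      · rw [Fin.snoc_castSucc, Fin.snoc_castSucc]
        exact hm (Fin.castSucc_le_castSucc_iff.mp hij)
      · exact absurd (lt_of_le_of_lt hij (Fin.castSucc_lt_last k)) (lt_irrefl _)
    · rw [Fin.snoc_last]
      rcases Fin.eq_castSucc_or_eq_last i with ⟨m, rfl⟩ | rfl
      · rw [Fin.snoc_castSucc]
        exact le_trans (chain_mem_Icc hm h0 hl m).2 hu.2
      · rw [Fin.snoc_last]
  · have h : ((0 : Fin (n + 3))) = (0 : Fin (n + 2)).castSucc := by simp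
    rw [h, Fin.snoc_castSucc, h0]
  · rw [Fin.snoc_last]
  · conv_rhs => rw [Fin.sum_univ_castSucc]
    simp only [Fin.succ_castSucc, Fin.snoc_castSucc, Fin.succ_last, Fin.snoc_last, hl]

/-- Splitting off the last segment of a chain. -/
lemma chainSet_split {n : ℕ} {f : Fin (n + 2) → ℝ → ℝ} {t v : ℝ}
    (hv : v ∈ chainSet (n + 1) f t) :
    ∃ u ∈ Set.Icc (0:ℝ) t, ∃ w ∈ chainSet n (fun i => f i.castSucc) u,
      v = w + (f (Fin.last (n + 1)) t - f (Fin.last (n + 1)) u) := by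
  obtain ⟨s, hm, h0, hl, rfl⟩ := hv
  refine ⟨s (Fin.last (n + 1)).castSucc, chain_mem_Icc hm h0 hl _,
    ∑ i : Fin (n + 1), (f i.castSucc (s i.succ.castSucc) - f i.castSucc (s i.castSucc.castSucc)),
    ⟨fun i => s i.castSucc, fun i j hij => hm (Fin.castSucc_le_castSucc_iff.mpr hij),
      by simpa using h0, rfl, rfl⟩, ?_⟩
  conv_lhs => rw [Fin.sum_univ_castSucc]
  simp only [Fin.succ_castSucc, Fin.succ_last, hl]

lemma minPlusChain_succ {n : ℕ} (f : Fin (n + 2) → ℝ → ℝ) :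
    minPlusChain f = minPlus (minPlusChain fun i : Fin (n + 1) => f i.castSucc)
      (f (Fin.last (n + 1))) := by
  have hl : (List.ofFn fun i : Fin (n + 1) => f i.succ)
      = (List.ofFn fun i : Fin n => f i.succ.castSucc) ++ [f (Fin.last (n + 1))] := by
    rw [List.ofFn_succ' (fun i : Fin (n + 1) => f i.succ), List.concat_eq_append, Fin.succ_last]
    simp only [Fin.succ_castSucc]
  unfold minPlusChain
  rw [hl, List.foldl_concat]
  rfl

/-- The iterated min-plus product is an infimum over increasing chains of times:
`(f₁ ⊗ ⋯ ⊗ f_n)(t) = inf_{0 ≤ s₁ ≤ ⋯ ≤ s_{n-1} ≤ t}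
  [f₁(s₁) + (f₂(s₂) - f₂(s₁)) + ⋯ + (f_n(t) - f_n(s_{n-1}))]`,
where the chain is encoded as a monotone `s : Fin (n+1) → ℝ` with `s 0 = 0`, `s n = t`. -/
theorem minPlusChain_eq_inf (n : ℕ) (f : Fin (n + 1) → ℝ → ℝ)
    (hf : ∀ i, Continuous (f i)) (hf0 : ∀ i, f i 0 = 0) :
    ∀ t : ℝ, 0 ≤ t →
      minPlusChain f t =
        sInf { v : ℝ | ∃ s : Fin (n + 2) → ℝ, Monotone s ∧ s 0 = 0 ∧ s (Fin.last (n + 1)) = t ∧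
          v = ∑ i : Fin (n + 1), (f i (s i.succ) - f i (s i.castSucc)) } := by
  induction n with
  | zero =>
    intro t ht
    have hset : { v : ℝ | ∃ s : Fin 2 → ℝ, Monotone s ∧ s 0 = 0 ∧ s (Fin.last 1) = t ∧
        v = ∑ i : Fin 1, (f i (s i.succ) - f i (s i.castSucc)) } = {f 0 t} := by
      ext v
      simp only [Set.mem_setOf_eq, Set.mem_singleton_iff]
      constructor
      · rintro ⟨s, hm, h0, hl, rfl⟩
        rw [Fin.sum_univ_one]
        have h1 : (0 : Fin 1).succ = Fin.last 1 := rfl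
        have h2 : (0 : Fin 1).castSucc = 0 := rfl
        rw [h1, h2, hl, h0, hf0 0]
        ring
      · rintro rfl
        refine ⟨fun i => if i = 0 then 0 else t, ?_, ?_, ?_, ?_⟩
        · intro i j hij
          dsimp only
          fin_cases i <;> fin_cases j <;> simp_all
        · simp
        · dsimp only
          rw [if_neg (by decide)]
        · rw [Fin.sum_univ_one]
          have h1 : (0 : Fin 1).succ = (1 : Fin 2) := rfl
          have h2 : (0 : Fin 1).castSucc = (0 : Fin 2) := rfl
          dsimp only
          rw [h1, h2, if_neg (by decide), if_pos rfl, hf0 0]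
          ring
    rw [hset, csInf_singleton]
    simp [minPlusChain]
  | succ n ih =>
    intro t ht
    set g : Fin (n + 1) → ℝ → ℝ := fun i => f i.castSucc with hg
    have hgc : ∀ i, Continuous (g i) := fun i => hf _
    have hg0 : ∀ i, g i 0 = 0 := fun i => hf0 _
    obtain ⟨B, hB⟩ := chainSet_bdd n g hgc t
    obtain ⟨M, hM⟩ := isCompact_Icc.exists_bound_of_continuousOn
      (hf (Fin.last (n + 1))).continuousOn (s := Set.Icc (0:ℝ) t)
    show minPlusChain f t = sInf (chainSet (n + 1) f t)
    rw [minPlusChain_succ f, minPlus]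
    have hF : ∀ u ∈ Set.Icc (0:ℝ) t, minPlusChain g u = sInf (chainSet n g u) :=
      fun u hu => ih g hgc hg0 u hu.1
    have hFB : ∀ u ∈ Set.Icc (0:ℝ) t, B ≤ minPlusChain g u := by
      intro u hu
      rw [hF u hu]
      exact le_csInf (chainSet_nonempty n g hu.1) (fun v hv => hB u hu v hv)
    have hbddL : BddBelow ((fun s => minPlusChain g s + f (Fin.last (n + 1)) t
        - f (Fin.last (n + 1)) s) '' Set.Icc 0 t) := by
      refine ⟨B - 2 * M, ?_⟩
      rintro v ⟨u, hu, rfl⟩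
      have h1 := hM t ⟨ht, le_rfl⟩
      have h2 := hM u hu
      rw [Real.norm_eq_abs] at h1 h2
      have := abs_le.mp h1
      have := abs_le.mp h2
      have := hFB u hu
      dsimp only
      linarith
    apply le_antisymm
    · apply le_csInf (chainSet_nonempty (n + 1) f ht)
      intro v hv
      obtain ⟨u, hu, w, hw, rfl⟩ := chainSet_split hv
      have h1 : sInf ((fun s => minPlusChain g s + f (Fin.last (n + 1)) t
          - f (Fin.last (n + 1)) s) '' Set.Icc 0 t)
          ≤ minPlusChain g u + f (Fin.last (n + 1)) t - f (Fin.last (n + 1)) u :=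
        csInf_le hbddL ⟨u, hu, rfl⟩
      have h2 : minPlusChain g u ≤ w := by
        rw [hF u hu]
        exact csInf_le (chainSet_bddBelow n g hgc hu.1) hw
      linarith
    · apply le_csInf ((Set.nonempty_Icc.mpr ht).image _)
      rintro v ⟨u, hu, rfl⟩
      dsimp only
      rw [hF u hu]
      have key : ∀ w ∈ chainSet n g u, sInf (chainSet (n + 1) f t)
          - (f (Fin.last (n + 1)) t - f (Fin.last (n + 1)) u) ≤ w := by
        intro w hw
        have := csInf_le (chainSet_bddBelow (n + 1) f hf ht) (chainSet_snoc hu hw)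
        linarith
      have := le_csInf (chainSet_nonempty n g hu.1) key
      linarith
end
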